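/- Let W : (0,∞) → (0,∞) be differentiable with W' > 0 and W/W' non-decreasing, and let W̄(x) := ∫₀^x W(y)dy for x ≥ 0 (with W̄ = 0 on (-∞,0]). Then for each fixed b ≥ 0, the map x ↦ W̄(x−b)/W(x) is non-decreasing on (b,∞). -/

import Mathlib

open Real MeasureTheory Set Filter

section Aux

variable {W W' : ℝ → ℝ}

lemma aux_cont (hderiv : ∀ x > (0 : ℝ), HasDerivAt W (W' x) x) :
    ContinuousOn W (Set.Ioi 0) :=
  fun x hx => ((hderiv x hx).continuousAt).continuousWithinAt

lemma aux_mono (hderiv : ∀ x > (0 : ℝ), HasDerivAt W (W' x) x)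
    (hW'pos : ∀ x > (0 : ℝ), 0 < W' x) :
    MonotoneOn W (Set.Ioi 0) := by
  apply monotoneOn_of_deriv_nonneg (convex_Ioi 0) (aux_cont hderiv)
  · intro x hx
    rw [interior_Ioi] at hx
    exact (hderiv x hx).differentiableAt.differentiableWithinAt
  · intro x hx
    rw [interior_Ioi] at hx
    rw [(hderiv x hx).deriv]
    exact (hW'pos x hx).le

lemma aux_int (hderiv : ∀ x > (0 : ℝ), HasDerivAt W (W' x) x)
    (hWpos : ∀ x > (0 : ℝ), 0 < W x)
    (hW'pos : ∀ x > (0 : ℝ), 0 < W' x) :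
    ∀ y > (0 : ℝ), IntegrableOn W (Set.Ioc 0 y) := by
  intro y hy
  have hm : AEStronglyMeasurable W (volume.restrict (Set.Ioc 0 y)) :=
    ((aux_cont hderiv).mono Ioc_subset_Ioi_self).aestronglyMeasurable measurableSet_Ioc
  refine ⟨hm, HasFiniteIntegral.restrict_of_bounded (C := W y) ?_ ?_⟩
  · simp [Real.volume_Ioc]
  · filter_upwards [ae_restrict_mem measurableSet_Ioc] with t ht
    rw [Real.norm_eq_abs, abs_of_pos (hWpos t ht.1)]
    exact aux_mono hderiv hW'pos ht.1 (lt_trans ht.1 (lt_of_le_of_lt ht.2 (lt_add_one y)) |>.trans_le (le_refl _) |> fun _ => hy) ht.2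

lemma aux_intervalInt (hderiv : ∀ x > (0 : ℝ), HasDerivAt W (W' x) x)
    (hWpos : ∀ x > (0 : ℝ), 0 < W x)
    (hW'pos : ∀ x > (0 : ℝ), 0 < W' x) :
    ∀ y > (0 : ℝ), IntervalIntegrable W volume 0 y := fun y hy =>
  (intervalIntegrable_iff_integrableOn_Ioc_of_le hy.le).mpr
    (aux_int hderiv hWpos hW'pos y hy)

lemma aux_ftc (hderiv : ∀ x > (0 : ℝ), HasDerivAt W (W' x) x)
    (hWpos : ∀ x > (0 : ℝ), 0 < W x)
    (hW'pos : ∀ x > (0 : ℝ), 0 < W' x) :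
    ∀ s > (0 : ℝ), HasDerivAt (fun u => ∫ t in (0 : ℝ)..u, W t) (W s) s := by
  intro s hs
  exact intervalIntegral.integral_hasDerivAt_right
    (aux_intervalInt hderiv hWpos hW'pos s hs)
    ((aux_cont hderiv).stronglyMeasurableAtFilter isOpen_Ioi s hs)
    ((hderiv s hs).continuousAt)

/-- `W̄ t ≤ t * W y` for `0 < t ≤ y`. -/
lemma aux_bar_le (hderiv : ∀ x > (0 : ℝ), HasDerivAt W (W' x) x)
    (hWpos : ∀ x > (0 : ℝ), 0 < W x)
    (hW'pos : ∀ x > (0 : ℝ), 0 < W' x) :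
    ∀ y > (0 : ℝ), ∀ t, 0 < t → t ≤ y → (∫ s in (0 : ℝ)..t, W s) ≤ t * W y := by
  intro y hy t ht hty
  rw [intervalIntegral.integral_of_le ht.le]
  have hint : IntegrableOn W (Set.Ioc 0 t) :=
    (aux_int hderiv hWpos hW'pos y hy).mono_set (Set.Ioc_subset_Ioc_right hty)
  calc (∫ s in Set.Ioc 0 t, W s) ≤ ∫ _ in Set.Ioc 0 t, W y := by
        refine setIntegral_mono_on hint ((integrableOn_const_iff).mpr ?_) measurableSet_Ioc
          (fun s hs => aux_mono hderiv hW'pos hs.1 (hs.1.trans_le (hs.2.trans hty)) (hs.2.trans hty))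
        right; simp [Real.volume_Ioc]
    _ = t * W y := by
        simp [Real.volume_Ioc, ENNReal.toReal_ofReal ht.le, ht.le]

/-- Key estimate: `W̄ y ≤ (W y / W' y) * W y`. -/
lemma aux_key (hderiv : ∀ x > (0 : ℝ), HasDerivAt W (W' x) x)
    (hWpos : ∀ x > (0 : ℝ), 0 < W x)
    (hW'pos : ∀ x > (0 : ℝ), 0 < W' x)
    (hratio : MonotoneOn (fun x => W x / W' x) (Set.Ioi 0)) :
    ∀ y > (0 : ℝ), (∫ t in (0 : ℝ)..y, W t) ≤ (W y / W' y) * W y := by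
  intro y hy
  set c : ℝ := W y / W' y with hc
  have hcpos : 0 < c := div_pos (hWpos y hy) (hW'pos y hy)
  set F : ℝ → ℝ := fun s => c * W s - ∫ t in (0 : ℝ)..s, W t with hF
  have hFderiv : ∀ s > (0 : ℝ), HasDerivAt F (c * W' s - W s) s := by
    intro s hs
    exact ((hderiv s hs).const_mul c).sub (aux_ftc hderiv hWpos hW'pos s hs)
  have hFmono : ∀ t, 0 < t → t ≤ y → F t ≤ F y := by
    intro t ht hty
    have hmono : MonotoneOn F (Set.Icc t y) := by
      apply monotoneOn_of_deriv_nonneg (convex_Icc t y)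
      · intro s hs
        exact (hFderiv s (ht.trans_le hs.1)).continuousAt.continuousWithinAt
      · intro s hs
        rw [interior_Icc] at hs
        exact (hFderiv s (ht.trans hs.1)).differentiableAt.differentiableWithinAt
      · intro s hs
        rw [interior_Icc] at hs
        have hs0 : 0 < s := ht.trans hs.1
        rw [(hFderiv s hs0).deriv]
        have h1 : W s / W' s ≤ c := hratio hs0 hy (hs.2.le.trans le_rfl)
        have h2 : W s ≤ c * W' s := by
          rw [div_le_iff₀ (hW'pos s hs0)] at h1
          linarith
        linarith
    exact hmono (Set.left_mem_Icc.mpr hty) (Set.right_mem_Icc.mpr hty) hty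
  -- F y ≥ -t * W y for all small t
  have hFy : ∀ t, 0 < t → t ≤ y → -(t * W y) ≤ F y := by
    intro t ht hty
    have h1 : F t ≤ F y := hFmono t ht hty
    have h2 : (∫ s in (0 : ℝ)..t, W s) ≤ t * W y := aux_bar_le hderiv hWpos hW'pos y hy t ht hty
    have h3 : 0 < c * W t := mul_pos hcpos (hWpos t ht)
    simp only [hF] at h1 ⊢
    linarith
  have hFy0 : 0 ≤ F y := by
    by_contra h
    push_neg at h
    have hWy : 0 < W y := hWpos y hy
    set t : ℝ := min y (-F y / W y / 2) with htdef
    have ht : 0 < t := lt_min hy (div_pos (div_pos (neg_pos.mpr h) hWy) two_pos)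
    have hty : t ≤ y := min_le_left _ _
    have hA : -(t * W y) ≤ F y := hFy t ht hty
    have htle : t ≤ -F y / W y / 2 := min_le_right _ _
    have hB : t * W y ≤ -F y / 2 := by
      calc t * W y ≤ (-F y / W y / 2) * W y :=
            mul_le_mul_of_nonneg_right htle hWy.le
        _ = -F y / 2 := by field_simp
    clear_value t
    have hC : -F y ≤ t * W y := by linarith
    have hD : -F y ≤ -F y / 2 := hC.trans hB
    linarith
  simp only [hF] at hFy0
  linarith

end Aux

/-- Monotonicity of `h̄₄` (Lemma 6.5): if `W` is differentiable on `(0,∞)` with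
`W, W' > 0` and `W/W'` non-decreasing, and `W̄(x) = ∫₀^x W`, then for each `b ≥ 0`
the map `x ↦ W̄(x−b)/W(x)` is non-decreasing on `(b,∞)`. -/
theorem statement9 (W W' : ℝ → ℝ)
    (hderiv : ∀ x > (0 : ℝ), HasDerivAt W (W' x) x)
    (hWpos : ∀ x > (0 : ℝ), 0 < W x)
    (hW'pos : ∀ x > (0 : ℝ), 0 < W' x)
    (hratio : MonotoneOn (fun x => W x / W' x) (Set.Ioi 0)) :
    ∀ b ≥ (0 : ℝ),
      MonotoneOn (fun x => (∫ t in (0 : ℝ)..(x - b), W t) / W x) (Set.Ioi b) := by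
  intro b hb
  have hfd : ∀ x ∈ Set.Ioi b, HasDerivAt (fun x => (∫ t in (0 : ℝ)..(x - b), W t) / W x)
      ((W (x - b) * W x - (∫ t in (0 : ℝ)..(x - b), W t) * W' x) / (W x) ^ 2) x := by
    intro x hx
    have hx0 : 0 < x := lt_of_le_of_lt hb hx
    have hxb : 0 < x - b := sub_pos.mpr hx
    have hnum : HasDerivAt (fun x => ∫ t in (0 : ℝ)..(x - b), W t) (W (x - b)) x := by
      have := (aux_ftc hderiv hWpos hW'pos (x - b) hxb).comp x
        ((hasDerivAt_id x).sub_const b)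
      simpa [Function.comp_def] using this
    exact hnum.div (hderiv x hx0) (hWpos x hx0).ne'
  apply monotoneOn_of_deriv_nonneg (convex_Ioi b)
  · intro x hx
    exact (hfd x hx).continuousAt.continuousWithinAt
  · intro x hx
    rw [interior_Ioi] at hx
    exact (hfd x hx).differentiableAt.differentiableWithinAt
  · intro x hx
    rw [interior_Ioi] at hx
    rw [(hfd x hx).deriv]
    have hx0 : 0 < x := lt_of_le_of_lt hb hx
    have hxb : 0 < x - b := sub_pos.mpr hx
    have h1 : (∫ t in (0 : ℝ)..(x - b), W t) ≤ (W (x - b) / W' (x - b)) * W (x - b) :=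
      aux_key hderiv hWpos hW'pos hratio (x - b) hxb
    have h2 : W (x - b) / W' (x - b) ≤ W x / W' x := hratio hxb hx0 (sub_le_self x hb)
    have h3 : (∫ t in (0 : ℝ)..(x - b), W t) ≤ (W x / W' x) * W (x - b) :=
      h1.trans (mul_le_mul_of_nonneg_right h2 (hWpos _ hxb).le)
    have h4 : (∫ t in (0 : ℝ)..(x - b), W t) * W' x ≤ W x * W (x - b) := by
      have := mul_le_mul_of_nonneg_right h3 (hW'pos x hx0).le
      rwa [mul_comm (W x / W' x) (W (x - b)), mul_assoc,
        div_mul_cancel₀ _ (hW'pos x hx0).ne', mul_comm (W (x - b))] at this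
    have h5 : 0 ≤ W (x - b) * W x - (∫ t in (0 : ℝ)..(x - b), W t) * W' x := by
      linarith [h4]
    positivity
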